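/- Fix an (n,k)-source X and ε > 0, and let m ≤ k − 2·log₂(1/ε). Then a uniformly random function F: {0,1}^n → {0,1}^m satisfies F(X) ≈_ε U_m with probability at least 1 − 2·e^{−ε²·2^k} over the choice of F. -/

import Mathlib

open Finset
open scoped Classical

/-- Bit strings of length `n`. -/
abbrev BS (n : ℕ) : Type := Fin n → Bool

/-- `p` is a probability mass function on the finite type `S`. -/
def IsDist {S : Type*} [Fintype S] (p : S → ℝ) : Prop :=
  (∀ s, 0 ≤ p s) ∧ ∑ s, p s = 1

/-- Statistical distance between two distributions on `S`. -/
noncomputable def statDist {S : Type*} [Fintype S] (p q : S → ℝ) : ℝ :=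
  (∑ s, |p s - q s|) / 2

/-- Pushforward of a distribution `p` on `S` along `f : S → T`. -/
noncomputable def push {S T : Type*} [Fintype S] [DecidableEq T] (f : S → T)
    (p : S → ℝ) : T → ℝ :=
  fun t => ∑ s, if f s = t then p s else 0

/-- The uniform distribution on `{0,1}^m`. -/
noncomputable def unif (m : ℕ) : BS m → ℝ := fun _ => 1 / 2 ^ m

lemma hoeffding_bernoulli (q s : ℝ) (h0 : 0 ≤ q) (h1 : q ≤ 1) :
    q * Real.exp (s * (1 - q)) + (1 - q) * Real.exp (-(s * q)) ≤ Real.exp (s ^ 2 / 8) := by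
  have hg : ∀ u : ℝ, 0 < 1 - q + q * Real.exp u := by
    intro u
    rcases lt_or_eq_of_le h1 with h | h
    · have : 0 ≤ q * Real.exp u := mul_nonneg h0 (Real.exp_pos u).le
      linarith
    · rw [h]; simpa using Real.exp_pos u
  -- g u := 1 - q + q * exp u
  have hgd : ∀ u : ℝ, HasDerivAt (fun u : ℝ => 1 - q + q * Real.exp u) (q * Real.exp u) u :=
    fun u => ((Real.hasDerivAt_exp u).const_mul q).const_add (1 - q)
  -- φ = derivative of f
  set φ : ℝ → ℝ := fun u => u / 4 + q - q * Real.exp u / (1 - q + q * Real.exp u) with hφdef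
  set f : ℝ → ℝ := fun u => u ^ 2 / 8 + u * q - Real.log (1 - q + q * Real.exp u) with hfdef
  have hfd : ∀ u : ℝ, HasDerivAt f (φ u) u := by
    intro u
    have h1' : HasDerivAt (fun u : ℝ => u ^ 2 / 8 + u * q)
        ((2 : ℕ) * u ^ 1 / 8 + 1 * q) u :=
      ((hasDerivAt_pow 2 u).div_const 8).add ((hasDerivAt_id u).mul_const q)
    have h2 : HasDerivAt (fun u : ℝ => Real.log (1 - q + q * Real.exp u))
        (q * Real.exp u / (1 - q + q * Real.exp u)) u := (hgd u).log (hg u).ne'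
    have := h1'.sub h2
    refine this.congr_deriv ?_
    simp [hφdef]; ring
  have hφd : ∀ u : ℝ, HasDerivAt φ
      (1 / 4 - q * (1 - q) * Real.exp u / (1 - q + q * Real.exp u) ^ 2) u := by
    intro u
    have h1' : HasDerivAt (fun u : ℝ => u / 4 + q) (1 / 4) u := by
      simpa using ((hasDerivAt_id u).div_const 4).add_const q
    have h2 : HasDerivAt (fun u : ℝ => q * Real.exp u / (1 - q + q * Real.exp u))
        ((q * Real.exp u * (1 - q + q * Real.exp u) - q * Real.exp u * (q * Real.exp u)) /
          (1 - q + q * Real.exp u) ^ 2) u :=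
      ((Real.hasDerivAt_exp u).const_mul q).div (hgd u) (hg u).ne'
    have := h1'.sub h2
    refine this.congr_deriv ?_
    have h3 : (1 - q + q * Real.exp u) ^ 2 ≠ 0 := pow_ne_zero 2 (hg u).ne'
    field_simp
    ring
  have hφmono : Monotone φ := by
    apply monotone_of_deriv_nonneg (fun u => (hφd u).differentiableAt)
    intro u
    rw [(hφd u).deriv]
    have h4 : 4 * (q * (1 - q) * Real.exp u) ≤ (1 - q + q * Real.exp u) ^ 2 := by
      nlinarith [sq_nonneg (1 - q - q * Real.exp u)]
    have hp : (0:ℝ) < (1 - q + q * Real.exp u) ^ 2 := pow_pos (hg u) 2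
    rw [sub_nonneg, div_le_iff₀ hp]
    linarith
  have hφ0 : φ 0 = 0 := by
    simp [hφdef, Real.exp_zero]
  have hf0 : f 0 = 0 := by
    simp [hfdef, Real.exp_zero]
  have hfdiff : Differentiable ℝ f := fun u => (hfd u).differentiableAt
  have hfnonneg : 0 ≤ f s := by
    rcases le_total 0 s with hs | hs
    · have hmono : MonotoneOn f (Set.Ici (0:ℝ)) := by
        apply monotoneOn_of_deriv_nonneg (convex_Ici 0) hfdiff.continuous.continuousOn
          hfdiff.differentiableOn
        intro x hx
        rw [(hfd x).deriv, ← hφ0]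
        exact hφmono (le_of_lt (by simpa using hx))
      have := hmono Set.self_mem_Ici hs hs
      rwa [hf0] at this
    · have hanti : AntitoneOn f (Set.Iic (0:ℝ)) := by
        apply antitoneOn_of_deriv_nonpos (convex_Iic 0) hfdiff.continuous.continuousOn
          hfdiff.differentiableOn
        intro x hx
        rw [(hfd x).deriv, ← hφ0]
        exact hφmono (le_of_lt (by simpa using hx))
      have := hanti hs Set.self_mem_Iic hs
      rwa [hf0] at this
  -- conclude
  have hfs : (0:ℝ) ≤ s ^ 2 / 8 + s * q - Real.log (1 - q + q * Real.exp s) := hfnonneg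
  have hrw : q * Real.exp (s * (1 - q)) + (1 - q) * Real.exp (-(s * q))
      = Real.exp (Real.log (1 - q + q * Real.exp s) - s * q) := by
    rw [Real.exp_sub, Real.exp_log (hg s), eq_div_iff (Real.exp_ne_zero (s * q))]
    rw [add_mul, mul_assoc, mul_assoc, ← Real.exp_add, ← Real.exp_add]
    have e1 : s * (1 - q) + s * q = s := by ring
    have e2 : -(s * q) + s * q = 0 := by ring
    rw [e1, e2, Real.exp_zero]
    ring
  rw [hrw]
  apply Real.exp_le_exp.2
  linarith

lemma chernoff_T (n m : ℕ) (k ε : ℝ) (X : BS n → ℝ)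
    (hX : IsDist X) (hsrc : ∀ x, X x ≤ (2:ℝ) ^ (-k)) (hε : 0 < ε) (T : Finset (BS m)) :
    ((Finset.univ.filter (fun F : BS n → BS m =>
        ε < ∑ x, X x * ((if F x ∈ T then (1:ℝ) else 0) - (T.card : ℝ) / 2 ^ m))).card : ℝ)
      ≤ ((Finset.univ : Finset (BS n → BS m)).card : ℝ)
          * Real.exp (-(2 * (ε ^ 2 * (2:ℝ) ^ k))) := by
  set K : ℝ := (2:ℝ) ^ k with hKdef
  have hK : 0 < K := Real.rpow_pos_of_pos two_pos k
  set t : ℝ := 4 * ε * K with htdef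
  have ht : 0 < t := by positivity
  set q : ℝ := (T.card : ℝ) / 2 ^ m with hqdef
  set dev : (BS n → BS m) → ℝ :=
    fun F => ∑ x, X x * ((if F x ∈ T then (1:ℝ) else 0) - q) with hdevdef
  -- q is in [0,1]
  have h2m : (0:ℝ) < 2 ^ m := by positivity
  have hq0 : 0 ≤ q := by positivity
  have hTcard : (T.card : ℝ) ≤ 2 ^ m := by
    have := Finset.card_le_card (Finset.subset_univ T)
    have hcu : (Finset.univ : Finset (BS m)).card = 2 ^ m := by
      simp [Finset.card_univ, Fintype.card_fun]
    rw [hcu] at this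
    exact_mod_cast this
  have hq1 : q ≤ 1 := by rw [hqdef, div_le_one h2m]; exact hTcard
  -- step 1 : Chernoff counting
  set e : BS n → BS m → ℝ :=
    fun x v => Real.exp (t * X x * ((if v ∈ T then (1:ℝ) else 0) - q)) with hedef
  have step1 : ((Finset.univ.filter (fun F : BS n → BS m => ε < dev F)).card : ℝ)
      ≤ ∑ F : BS n → BS m, Real.exp (t * (dev F - ε)) := by
    rw [Finset.card_filter]
    push_cast
    apply Finset.sum_le_sum
    intro F _
    by_cases h : ε < dev F
    · simp only [h, if_true]
      exact Real.one_le_exp (by nlinarith)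
    · simp only [h, if_false]
      positivity
  have step2 : ∀ F : BS n → BS m,
      Real.exp (t * (dev F - ε)) = Real.exp (-(t * ε)) * ∏ x, e x (F x) := by
    intro F
    simp only [hedef]
    rw [← Real.exp_sum, ← Real.exp_add]
    congr 1
    rw [hdevdef]
    simp only
    rw [mul_sub, Finset.mul_sum]
    simp only [← mul_assoc]
    ring
  have factor : ∑ F : BS n → BS m, ∏ x, e x (F x) = ∏ x, ∑ v, e x v := by
    rw [← Finset.sum_prod_piFinset (Finset.univ : Finset (BS m)) e, Fintype.piFinset_univ]
  have perx : ∀ x : BS n, ∑ v, e x v ≤ (2 ^ m : ℝ) * Real.exp ((t * X x) ^ 2 / 8) := by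
    intro x
    set s : ℝ := t * X x with hsdef
    have hsplit : ∀ v : BS m, e x v =
        if v ∈ T then Real.exp (s * (1 - q)) else Real.exp (-(s * q)) := by
      intro v
      simp only [hedef, hsdef]
      by_cases hv : v ∈ T
      · rw [if_pos hv, if_pos hv]
      · rw [if_neg hv, if_neg hv]; congr 1; ring
    calc ∑ v, e x v
        = ∑ v : BS m, (if v ∈ T then Real.exp (s * (1 - q)) else Real.exp (-(s * q))) := by
          exact Finset.sum_congr rfl (fun v _ => hsplit v)
      _ = (T.card : ℝ) * Real.exp (s * (1 - q))
          + ((2 ^ m : ℝ) - T.card) * Real.exp (-(s * q)) := by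
          rw [Finset.sum_ite, Finset.sum_const, Finset.sum_const]
          rw [Finset.filter_univ_mem]
          have hcompl : (Finset.univ.filter (fun v : BS m => ¬ v ∈ T)).card
              = 2 ^ m - T.card := by
            have := Finset.card_filter_add_card_filter_not
              (s := (Finset.univ : Finset (BS m))) (p := fun v => v ∈ T)
            rw [Finset.filter_univ_mem] at this
            have hcu : (Finset.univ : Finset (BS m)).card = 2 ^ m := by
              simp [Finset.card_univ, Fintype.card_fun]
            omega
          have hle : T.card ≤ 2 ^ m := by exact_mod_cast hTcard
          rw [hcompl]
          simp only [nsmul_eq_mul]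
          rw [Nat.cast_sub hle]
          push_cast
          ring
      _ = (2 ^ m : ℝ) * (q * Real.exp (s * (1 - q)) + (1 - q) * Real.exp (-(s * q))) := by
          rw [hqdef]; field_simp; try ring
      _ ≤ (2 ^ m : ℝ) * Real.exp (s ^ 2 / 8) := by
          apply mul_le_mul_of_nonneg_left (hoeffding_bernoulli q s hq0 hq1) h2m.le
  have hsum2 : ∑ x, (X x) ^ 2 ≤ (2:ℝ) ^ (-k) := by
    calc ∑ x, (X x) ^ 2 ≤ ∑ x, (2:ℝ) ^ (-k) * X x := by
          apply Finset.sum_le_sum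
          intro x _
          have h1 := hX.1 x
          have h2 := hsrc x
          nlinarith
      _ = (2:ℝ) ^ (-k) := by rw [← Finset.mul_sum, hX.2, mul_one]
  have hNcard : ((Finset.univ : Finset (BS n → BS m)).card : ℝ)
      = ((2:ℝ) ^ m) ^ (Fintype.card (BS n)) := by
    rw [Finset.card_univ, Fintype.card_fun]
    push_cast
    congr 1
    simp [Fintype.card_fun]
  have hKinv : K * (2:ℝ) ^ (-k) = 1 := by
    rw [hKdef, ← Real.rpow_add two_pos]
    simp
  calc ((Finset.univ.filter (fun F : BS n → BS m => ε < dev F)).card : ℝ)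
      ≤ ∑ F : BS n → BS m, Real.exp (t * (dev F - ε)) := step1
    _ = Real.exp (-(t * ε)) * ∑ F : BS n → BS m, ∏ x, e x (F x) := by
        rw [Finset.mul_sum]
        exact Finset.sum_congr rfl (fun F _ => step2 F)
    _ = Real.exp (-(t * ε)) * ∏ x, ∑ v, e x v := by rw [factor]
    _ ≤ Real.exp (-(t * ε)) * ∏ x, ((2 ^ m : ℝ) * Real.exp ((t * X x) ^ 2 / 8)) := by
        apply mul_le_mul_of_nonneg_left _ (Real.exp_pos _).le
        apply Finset.prod_le_prod
        · intro x _
          apply Finset.sum_nonneg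
          intro v _
          exact (Real.exp_pos _).le
        · intro x _
          exact perx x
    _ = Real.exp (-(t * ε)) * (((2:ℝ) ^ m) ^ (Fintype.card (BS n))
          * Real.exp (∑ x, (t * X x) ^ 2 / 8)) := by
        rw [Finset.prod_mul_distrib, Finset.prod_const, Real.exp_sum, Finset.card_univ]
    _ ≤ Real.exp (-(t * ε)) * (((2:ℝ) ^ m) ^ (Fintype.card (BS n))
          * Real.exp (t ^ 2 * (2:ℝ) ^ (-k) / 8)) := by
        apply mul_le_mul_of_nonneg_left _ (Real.exp_pos _).le
        apply mul_le_mul_of_nonneg_left _ (by positivity)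
        apply Real.exp_le_exp.2
        have : ∑ x, (t * X x) ^ 2 / 8 = t ^ 2 / 8 * ∑ x, (X x) ^ 2 := by
          rw [Finset.mul_sum]
          exact Finset.sum_congr rfl (fun x _ => by ring)
        rw [this]
        have h8 : 0 ≤ t ^ 2 / 8 := by positivity
        nlinarith [hsum2]
    _ ≤ ((Finset.univ : Finset (BS n → BS m)).card : ℝ)
          * Real.exp (-(2 * (ε ^ 2 * K))) := by
        rw [hNcard]
        rw [mul_comm (Real.exp (-(t * ε))), mul_assoc, ← Real.exp_add]
        apply mul_le_mul_of_nonneg_left _ (by positivity)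
        apply Real.exp_le_exp.2
        apply le_of_eq
        rw [htdef]
        linear_combination (2 * ε ^ 2 * K) * hKinv

/-- A uniformly random function `F : {0,1}^n → {0,1}^m` with `m ≤ k - 2·log₂(1/ε)`
extracts from a fixed `(n,k)`-source `X` with error `ε`, with probability at least
`1 - 2·e^{-ε²·2^k}` over the choice of `F`. -/
theorem random_function_extracts
    (n m : ℕ) (k ε : ℝ) (X : BS n → ℝ)
    (hX : IsDist X) (hsrc : ∀ x, X x ≤ (2:ℝ) ^ (-k)) (hε : 0 < ε)
    (hm : (m:ℝ) ≤ k - 2 * Real.logb 2 (1 / ε)) :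
    1 - 2 * Real.exp (-(ε ^ 2 * (2:ℝ) ^ k)) ≤
      ((Finset.univ.filter (fun F : BS n → BS m =>
          statDist (push F X) (unif m) ≤ ε)).card : ℝ) /
        ((Finset.univ : Finset (BS n → BS m)).card : ℝ) := by
  have hK : (0:ℝ) < (2:ℝ) ^ k := Real.rpow_pos_of_pos two_pos k
  set V : ℝ := ε ^ 2 * (2:ℝ) ^ k with hVdef
  have hV : 0 < V := by positivity
  have hNnat : 0 < (Finset.univ : Finset (BS n → BS m)).card :=
    Finset.card_pos.2 ⟨fun _ _ => true, Finset.mem_univ _⟩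
  have hN : (0:ℝ) < ((Finset.univ : Finset (BS n → BS m)).card : ℝ) := by exact_mod_cast hNnat
  have h2mpos : (0:ℝ) < 2 ^ m := by positivity
  -- basic facts about push and unif
  have hpush_nonneg : ∀ (F : BS n → BS m) v, 0 ≤ push F X v := by
    intro F v
    apply Finset.sum_nonneg
    intro x _
    by_cases h : F x = v <;> simp [h, hX.1 x]
  have hpush_sum : ∀ F : BS n → BS m, ∑ v, push F X v = 1 := by
    intro F
    calc ∑ v, push F X v = ∑ v, ∑ x, (if F x = v then X x else 0) := rfl
      _ = ∑ x, ∑ v, (if F x = v then X x else 0) := Finset.sum_comm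
      _ = ∑ x : BS n, X x := by
          apply Finset.sum_congr rfl
          intro x _
          rw [Finset.sum_ite_eq (Finset.univ : Finset (BS m)) (F x) (fun _ => X x)]
          simp
      _ = 1 := hX.2
  have hunif_sum : ∑ v : BS m, unif m v = 1 := by
    simp only [unif, Finset.sum_const, Finset.card_univ, Fintype.card_fun,
      Fintype.card_bool, Fintype.card_fin, nsmul_eq_mul]
    push_cast
    field_simp
  -- Claim A : large stat distance gives a witness set
  have claimA : ∀ F : BS n → BS m, ε < statDist (push F X) (unif m) →
      ∃ T : Finset (BS m),
        ε < ∑ x, X x * ((if F x ∈ T then (1:ℝ) else 0) - (T.card : ℝ) / 2 ^ m) := by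
    intro F hF
    set p : BS m → ℝ := push F X with hpdef
    set T : Finset (BS m) := Finset.univ.filter (fun v => unif m v < p v) with hTdef
    refine ⟨T, ?_⟩
    have hdev : ∑ x, X x * ((if F x ∈ T then (1:ℝ) else 0) - (T.card : ℝ) / 2 ^ m)
        = ∑ v ∈ T, (p v - unif m v) := by
      have h1 : ∑ x, X x * (if F x ∈ T then (1:ℝ) else 0) = ∑ v ∈ T, p v := by
        calc ∑ x, X x * (if F x ∈ T then (1:ℝ) else 0)
            = ∑ x, ∑ v ∈ T, (if F x = v then X x else 0) := by
              apply Finset.sum_congr rfl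
              intro x _
              rw [Finset.sum_ite_eq T (F x) (fun _ => X x)]
              by_cases h : F x ∈ T
              · rw [if_pos h, if_pos h, mul_one]
              · rw [if_neg h, if_neg h, mul_zero]
          _ = ∑ v ∈ T, ∑ x, (if F x = v then X x else 0) := Finset.sum_comm
          _ = ∑ v ∈ T, p v := rfl
      have h2 : ∑ x, X x * ((T.card : ℝ) / 2 ^ m) = ∑ v ∈ T, unif m v := by
        rw [← Finset.sum_mul, hX.2, one_mul]
        simp only [unif, Finset.sum_const, nsmul_eq_mul]
        ring
      calc ∑ x, X x * ((if F x ∈ T then (1:ℝ) else 0) - (T.card : ℝ) / 2 ^ m)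
          = ∑ x, (X x * (if F x ∈ T then (1:ℝ) else 0) - X x * ((T.card : ℝ) / 2 ^ m)) := by
            apply Finset.sum_congr rfl; intro x _; ring
        _ = (∑ x, X x * (if F x ∈ T then (1:ℝ) else 0))
              - ∑ x, X x * ((T.card : ℝ) / 2 ^ m) := Finset.sum_sub_distrib _ _
        _ = ∑ v ∈ T, (p v - unif m v) := by rw [h1, h2, ← Finset.sum_sub_distrib]
    have hzero : ∑ v, (p v - unif m v) = 0 := by
      rw [Finset.sum_sub_distrib, hpush_sum F, hunif_sum]; ring
    have hsplit0 : (∑ v ∈ T, (p v - unif m v))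
        + ∑ v ∈ Finset.univ.filter (fun v => ¬ unif m v < p v), (p v - unif m v) = 0 := by
      rw [hTdef, Finset.sum_filter_add_sum_filter_not]
      exact hzero
    have habs : statDist p (unif m) = ∑ v ∈ T, (p v - unif m v) := by
      have hpos : ∑ v ∈ Finset.univ.filter (fun v => unif m v < p v), |p v - unif m v|
          = ∑ v ∈ Finset.univ.filter (fun v => unif m v < p v), (p v - unif m v) := by
        apply Finset.sum_congr rfl
        intro v hv
        rw [Finset.mem_filter] at hv
        exact abs_of_pos (sub_pos.2 hv.2)
      have hneg : ∑ v ∈ Finset.univ.filter (fun v => ¬ unif m v < p v), |p v - unif m v|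
          = - ∑ v ∈ Finset.univ.filter (fun v => ¬ unif m v < p v), (p v - unif m v) := by
        rw [← Finset.sum_neg_distrib]
        apply Finset.sum_congr rfl
        intro v hv
        rw [Finset.mem_filter] at hv
        rw [abs_of_nonpos (by linarith [not_lt.1 hv.2])]
      have htot := Finset.sum_filter_add_sum_filter_not Finset.univ
        (fun v => unif m v < p v) (fun v => |p v - unif m v|)
      have htot2 := Finset.sum_filter_add_sum_filter_not Finset.univ
        (fun v => unif m v < p v) (fun v => p v - unif m v)
      rw [statDist, hTdef]
      linarith [htot, htot2, hpos, hneg, hzero]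
    rw [hdev, ← habs]
    exact hF
  -- union bound
  set badP : (BS n → BS m) → Prop := fun F => ε < statDist (push F X) (unif m) with hbadPdef
  have hsub : Finset.univ.filter badP
      ⊆ Finset.univ.biUnion (fun T : Finset (BS m) =>
          Finset.univ.filter (fun F : BS n → BS m =>
            ε < ∑ x, X x * ((if F x ∈ T then (1:ℝ) else 0) - (T.card : ℝ) / 2 ^ m))) := by
    intro F hF
    rw [Finset.mem_filter] at hF
    obtain ⟨T, hT⟩ := claimA F hF.2
    exact Finset.mem_biUnion.2 ⟨T, Finset.mem_univ _,
      Finset.mem_filter.2 ⟨Finset.mem_univ _, hT⟩⟩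
  have hbadbound : ((Finset.univ.filter badP).card : ℝ)
      ≤ (2:ℝ) ^ (2 ^ m : ℕ)
          * (((Finset.univ : Finset (BS n → BS m)).card : ℝ) * Real.exp (-(2 * V))) := by
    have hb1 : (Finset.univ.filter badP).card
        ≤ ∑ T : Finset (BS m), (Finset.univ.filter (fun F : BS n → BS m =>
            ε < ∑ x, X x * ((if F x ∈ T then (1:ℝ) else 0) - (T.card : ℝ) / 2 ^ m))).card :=
      le_trans (Finset.card_le_card hsub) (Finset.card_biUnion_le)
    have hb2 : ((Finset.univ.filter badP).card : ℝ)
        ≤ ∑ T : Finset (BS m), ((Finset.univ.filter (fun F : BS n → BS m =>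
            ε < ∑ x, X x * ((if F x ∈ T then (1:ℝ) else 0) - (T.card : ℝ) / 2 ^ m))).card : ℝ) := by
      exact_mod_cast hb1
    calc ((Finset.univ.filter badP).card : ℝ)
        ≤ ∑ T : Finset (BS m), ((Finset.univ.filter (fun F : BS n → BS m =>
            ε < ∑ x, X x * ((if F x ∈ T then (1:ℝ) else 0) - (T.card : ℝ) / 2 ^ m))).card : ℝ) := hb2
      _ ≤ ∑ _T : Finset (BS m), ((Finset.univ : Finset (BS n → BS m)).card : ℝ)
            * Real.exp (-(2 * (ε ^ 2 * (2:ℝ) ^ k))) := by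
          apply Finset.sum_le_sum
          intro T _
          exact chernoff_T n m k ε X hX hsrc hε T
      _ = (2:ℝ) ^ (2 ^ m : ℕ)
            * (((Finset.univ : Finset (BS n → BS m)).card : ℝ) * Real.exp (-(2 * V))) := by
          rw [Finset.sum_const, Finset.card_univ, nsmul_eq_mul]
          congr 2
          · rw [Fintype.card_finset]
            push_cast
            congr 1
            simp [Fintype.card_fun]
  -- 2^m ≤ V
  have hmV : ((2:ℝ) ^ (2 ^ m : ℕ)) * Real.exp (-(2 * V)) ≤ 2 * Real.exp (-V) := by
    have h2mV : ((2 ^ m : ℕ) : ℝ) ≤ V := by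
      have hlogb : Real.logb 2 (1 / ε) = - Real.logb 2 ε := by
        rw [one_div, Real.logb_inv]
      have hexp : (m : ℝ) ≤ k + 2 * Real.logb 2 ε := by rw [hlogb] at hm; linarith
      have h1 : ((2 ^ m : ℕ) : ℝ) = (2:ℝ) ^ ((m : ℕ) : ℝ) := by
        push_cast
        rw [Real.rpow_natCast]
      rw [h1]
      calc (2:ℝ) ^ ((m : ℕ) : ℝ) ≤ (2:ℝ) ^ (k + 2 * Real.logb 2 ε) :=
            Real.rpow_le_rpow_of_exponent_le one_le_two hexp
        _ = V := by
            rw [Real.rpow_add two_pos, hVdef]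
            have : (2:ℝ) ^ (2 * Real.logb 2 ε) = ε ^ 2 := by
              rw [show (2:ℝ) * Real.logb 2 ε = Real.logb 2 ε * 2 by ring,
                Real.rpow_mul (by norm_num : (0:ℝ) ≤ 2),
                Real.rpow_logb two_pos (by norm_num) hε]
              rw [show (2:ℝ) = ((2:ℕ):ℝ) by norm_num, Real.rpow_natCast]
            rw [this]
            ring
    have hexp2 : ((2:ℝ) ^ (2 ^ m : ℕ)) = Real.exp (((2 ^ m : ℕ) : ℝ) * Real.log 2) := by
      rw [← Real.exp_log (show (0:ℝ) < 2 by norm_num), ← Real.exp_nat_mul]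
      norm_num
    rw [hexp2, show (2:ℝ) * Real.exp (-V) = Real.exp (Real.log 2 + -V) by
      rw [Real.exp_add, Real.exp_log (show (0:ℝ) < 2 by norm_num)]]
    rw [← Real.exp_add]
    apply Real.exp_le_exp.2
    have hlog2 : Real.log 2 < 1 := by
      have := Real.log_two_lt_d9
      linarith
    have hlog2' : 0 ≤ Real.log 2 := Real.log_nonneg one_le_two
    nlinarith [h2mV, hV]
  -- assemble
  have hcards : (Finset.univ.filter (fun F : BS n → BS m =>
        statDist (push F X) (unif m) ≤ ε)).card
      + (Finset.univ.filter badP).card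
      = (Finset.univ : Finset (BS n → BS m)).card := by
    have := Finset.card_filter_add_card_filter_not
      (s := (Finset.univ : Finset (BS n → BS m)))
      (p := fun F : BS n → BS m => statDist (push F X) (unif m) ≤ ε)
    have hfe : Finset.univ.filter badP
        = Finset.univ.filter (fun F : BS n → BS m =>
            ¬ statDist (push F X) (unif m) ≤ ε) := by
      apply Finset.filter_congr
      intro F _
      simp [hbadPdef, not_le]
    rw [hfe]
    exact this
  have hbadfinal : ((Finset.univ.filter badP).card : ℝ)
      ≤ 2 * Real.exp (-V) * ((Finset.univ : Finset (BS n → BS m)).card : ℝ) := by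
    calc ((Finset.univ.filter badP).card : ℝ)
        ≤ (2:ℝ) ^ (2 ^ m : ℕ)
            * (((Finset.univ : Finset (BS n → BS m)).card : ℝ) * Real.exp (-(2 * V))) :=
          hbadbound
      _ = ((2:ℝ) ^ (2 ^ m : ℕ) * Real.exp (-(2 * V)))
            * ((Finset.univ : Finset (BS n → BS m)).card : ℝ) := by ring
      _ ≤ 2 * Real.exp (-V) * ((Finset.univ : Finset (BS n → BS m)).card : ℝ) :=
          mul_le_mul_of_nonneg_right hmV hN.le
  have hgood : ((Finset.univ.filter (fun F : BS n → BS m =>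
        statDist (push F X) (unif m) ≤ ε)).card : ℝ)
        = ((Finset.univ : Finset (BS n → BS m)).card : ℝ)
          - ((Finset.univ.filter badP).card : ℝ) := by
      have : ((Finset.univ.filter (fun F : BS n → BS m =>
          statDist (push F X) (unif m) ≤ ε)).card : ℝ)
          + ((Finset.univ.filter badP).card : ℝ)
          = ((Finset.univ : Finset (BS n → BS m)).card : ℝ) := by exact_mod_cast hcards
      linarith
  rw [le_div_iff₀ hN]
  nlinarith [hgood, hbadfinal, hN]
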